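/- arXiv:2009.13574 — 2 statements merged into one kernel-verified Lean document; each statement's English description precedes it below -/
import Mathlib

section
/- Let S : ℝⁿ → Matrix (Fin m) (Fin m) ℝ be a symmetric matrix polynomial, homogeneous of degree d, such that all coefficient matrices C_ξ in the expansion S(λ)·(Σᵢλᵢ)^k = Σ_{ξ} C_ξ λ^ξ are positive semidefinite for some k ∈ ℕ. Then S(λ²)·‖λ‖₂^{2k} is a sum of squares of matrix polynomials. -/
open Matrix MvPolynomial

lemma aeval_sq_monomial {n : ℕ} (ξ : Fin n →₀ ℕ) (c : ℝ) :
    MvPolynomial.aeval (fun t => (MvPolynomial.X t : MvPolynomial (Fin n) ℝ) ^ 2)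
      (MvPolynomial.monomial ξ c) = MvPolynomial.monomial (ξ + ξ) c := by
  rw [MvPolynomial.aeval_monomial, MvPolynomial.monomial_eq,
    Finsupp.prod_add_index' (fun a => pow_zero _) (fun a b₁ b₂ => pow_add _ _ _)]
  simp only [Finsupp.prod]
  rw [MvPolynomial.algebraMap_eq, ← Finset.prod_mul_distrib]
  congr 1
  exact Finset.prod_congr rfl fun a _ => by rw [← pow_add, ← two_mul, pow_mul]

/-- necessity construction of Lemma 1: if `S` is a symmetric matrix
polynomial, homogeneous of degree `d`, such that all matrix coefficients of
`S(λ)·(Σᵢλᵢ)^k` are positive semidefinite, then `S(λ²)·‖λ‖₂^{2k}` is a sum of squares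
of matrix polynomials. -/
theorem stmt7_psd_coefficients_give_sos (n m d k : ℕ)
    (S : Matrix (Fin m) (Fin m) (MvPolynomial (Fin n) ℝ))
    (hsym : Sᵀ = S)
    (hhom : ∀ i j, (S i j).IsHomogeneous d)
    (hcoeff : ∀ ξ : Fin n →₀ ℕ,
      (Matrix.of fun i j =>
        MvPolynomial.coeff ξ ((∑ t : Fin n, MvPolynomial.X t) ^ k * S i j)).PosSemidef) :
    ∃ (r : ℕ) (G : Fin r → Matrix (Fin m) (Fin m) (MvPolynomial (Fin n) ℝ)),
      (Matrix.of fun i j =>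
          (∑ t : Fin n, MvPolynomial.X t ^ 2) ^ k *
            MvPolynomial.aeval (fun t => MvPolynomial.X t ^ 2) (S i j)) =
        ∑ s : Fin r, (G s)ᵀ * G s := by
  classical
  set P : Matrix (Fin m) (Fin m) (MvPolynomial (Fin n) ℝ) :=
    fun i j => (∑ t : Fin n, MvPolynomial.X t) ^ k * S i j with hP
  -- choose Cholesky factors
  have hfac : ∀ ξ : Fin n →₀ ℕ, ∃ D : Matrix (Fin m) (Fin m) ℝ,
      (Matrix.of fun i j => MvPolynomial.coeff ξ (P i j)) = Dᵀ * D := by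
    intro ξ
    obtain ⟨D, hD⟩ : ∃ D : Matrix (Fin m) (Fin m) ℝ,
        (Matrix.of fun i j => MvPolynomial.coeff ξ (P i j)) = Dᴴ * D := by
      open scoped MatrixOrder in
      have h0 : (0 : Matrix (Fin m) (Fin m) ℝ) ≤ Matrix.of fun i j => MvPolynomial.coeff ξ (P i j) :=
        Matrix.nonneg_iff_posSemidef.mpr (hcoeff ξ)
      open scoped MatrixOrder in
      exact ⟨CFC.sqrt (Matrix.of fun i j => MvPolynomial.coeff ξ (P i j)), by
        rw [← Matrix.star_eq_conjTranspose, (CFC.sqrt_nonneg _).isSelfAdjoint.star_eq,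
          CFC.sqrt_mul_sqrt_self _ h0]⟩
    exact ⟨D, by simpa using hD⟩
  choose D hD using hfac
  -- the candidate square-root matrices
  set g : (Fin n →₀ ℕ) → Matrix (Fin m) (Fin m) (MvPolynomial (Fin n) ℝ) :=
    fun ξ => Matrix.of fun a b =>
      MvPolynomial.C (D ξ a b) * MvPolynomial.monomial ξ (1 : ℝ) with hg
  -- the finite set of relevant exponents
  set T : Finset (Fin n →₀ ℕ) :=
    Finset.univ.biUnion (fun p : Fin m × Fin m => (P p.1 p.2).support) with hT
  let e : T ≃ Fin T.card := T.equivFin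
  refine ⟨T.card, fun s => g (e.symm s : Fin n →₀ ℕ), ?_⟩
  have hsum : ∑ s : Fin T.card, (g (e.symm s : Fin n →₀ ℕ))ᵀ * g (e.symm s : Fin n →₀ ℕ)
      = ∑ ξ ∈ T, (g ξ)ᵀ * g ξ := by
    rw [← Equiv.sum_comp e (fun s => (g (e.symm s : Fin n →₀ ℕ))ᵀ * g (e.symm s : Fin n →₀ ℕ))]
    simp only [Equiv.symm_apply_apply]
    exact Finset.sum_coe_sort T (fun ξ => (g ξ)ᵀ * g ξ)
  rw [hsum]
  apply Matrix.ext
  intro i j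
  simp only [Matrix.of_apply, Matrix.sum_apply]
  -- rewrite LHS as aeval of P i j
  have hL : (∑ t : Fin n, MvPolynomial.X t ^ 2) ^ k *
      MvPolynomial.aeval (fun t => (MvPolynomial.X t : MvPolynomial (Fin n) ℝ) ^ 2) (S i j)
      = MvPolynomial.aeval (fun t => (MvPolynomial.X t : MvPolynomial (Fin n) ℝ) ^ 2) (P i j) := by
    rw [hP]
    simp only [_root_.map_mul, map_pow, map_sum, MvPolynomial.aeval_X]
  rw [hL]
  -- expand aeval of P i j as a sum over T
  have hsupp : (P i j).support ⊆ T := by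
    intro ξ hξ
    rw [hT]
    exact Finset.mem_biUnion.mpr ⟨(i, j), Finset.mem_univ _, hξ⟩
  have hexp : MvPolynomial.aeval
      (fun t => (MvPolynomial.X t : MvPolynomial (Fin n) ℝ) ^ 2) (P i j)
      = ∑ ξ ∈ T, MvPolynomial.monomial (ξ + ξ) (MvPolynomial.coeff ξ (P i j)) := by
    conv_lhs => rw [(P i j).as_sum]
    rw [map_sum]
    rw [Finset.sum_subset hsupp]
    · exact Finset.sum_congr rfl fun ξ _ => aeval_sq_monomial ξ _
    · intro ξ _ hξ
      rw [MvPolynomial.notMem_support_iff.mp hξ]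
      simp
  rw [hexp]
  -- compute the RHS entrywise
  refine Finset.sum_congr rfl fun ξ _ => ?_
  have hC : MvPolynomial.coeff ξ (P i j) = ((D ξ)ᵀ * D ξ) i j := by
    rw [← hD ξ]; rfl
  rw [hC, hg]
  simp only [Matrix.mul_apply, Matrix.transpose_apply, Matrix.of_apply]
  rw [map_sum (MvPolynomial.monomial (ξ + ξ))]
  refine Finset.sum_congr rfl fun l _ => ?_
  rw [mul_mul_mul_comm, MvPolynomial.monomial_mul, mul_one,
    ← MvPolynomial.C_mul, MvPolynomial.C_mul_monomial, mul_one]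
end

section
/- Polya's theorem (scalar case): if p : ℝⁿ → ℝ is a homogeneous polynomial with p(λ) > 0 for all λ in the standard simplex Λ, then there exists k ∈ ℕ such that all coefficients of the polynomial p(λ)·(λ₁ + ⋯ + λₙ)^k are positive. -/
open MvPolynomial Finset

-- coefficient of (∑ X i)^k
lemma aux_coeff_sumX_pow (n k : ℕ) (μ : Fin n →₀ ℕ) :
    MvPolynomial.coeff μ ((∑ i : Fin n, MvPolynomial.X i : MvPolynomial (Fin n) ℝ) ^ k)
      = if (∑ i, μ i) = k then (Nat.multinomial Finset.univ ⇑μ : ℝ) else 0 := by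
  rw [Finset.sum_pow_eq_sum_piAntidiag]
  rw [MvPolynomial.coeff_sum]
  have key : ∀ g : Fin n → ℕ, (∏ i : Fin n, (MvPolynomial.X i : MvPolynomial (Fin n) ℝ) ^ g i)
      = MvPolynomial.monomial (Finsupp.equivFunOnFinite.symm g) 1 := by
    intro g
    set G := Finsupp.equivFunOnFinite.symm g with hG
    have hGg : ∀ i, G i = g i := fun i => rfl
    rw [← MvPolynomial.prod_X_pow_eq_monomial]
    rw [Finset.prod_subset (Finset.subset_univ G.support)]
    · exact Finset.prod_congr rfl fun i _ => by rw [hGg]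
    · intro i _ hi
      have : G i = 0 := Finsupp.notMem_support_iff.mp hi
      rw [this, pow_zero]
  by_cases h : (∑ i, μ i) = k
  · rw [if_pos h]
    rw [Finset.sum_eq_single_of_mem (⇑μ)]
    · rw [key, ← MvPolynomial.C_eq_coe_nat, MvPolynomial.coeff_C_mul, MvPolynomial.coeff_monomial,
        if_pos (Finsupp.equivFunOnFinite_symm_coe μ), mul_one]
    · rw [Finset.mem_piAntidiag]
      exact ⟨h, fun i _ => Finset.mem_univ i⟩
    · intro g _ hg
      rw [key, ← MvPolynomial.C_eq_coe_nat, MvPolynomial.coeff_C_mul, MvPolynomial.coeff_monomial, if_neg, mul_zero]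
      intro hc
      apply hg
      have := congrArg (⇑Finsupp.equivFunOnFinite) hc
      have h' : g = Finsupp.equivFunOnFinite μ := by simpa using this
      exact h'
  · rw [if_neg h]
    apply Finset.sum_eq_zero
    intro g hg
    rw [Finset.mem_piAntidiag] at hg
    rw [key, ← MvPolynomial.C_eq_coe_nat, MvPolynomial.coeff_C_mul, MvPolynomial.coeff_monomial, if_neg, mul_zero]
    intro hc
    apply h
    rw [← hg.1]
    have : ∀ i, μ i = g i := fun i => by
      have := congrArg (fun f => Finsupp.equivFunOnFinite f i) hc.symm
      simpa using this
    exact Finset.sum_congr rfl fun i _ => this i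

-- Lemma A: multinomial identity
lemma aux_multinomial_desc {n : ℕ} (ξ v : Fin n →₀ ℕ) (hv : v ≤ ξ) (k : ℕ)
    (hs : (∑ i, (ξ - v) i) = k) :
    Nat.multinomial Finset.univ ⇑(ξ - v) * ∏ i, (ξ i).factorial
      = k.factorial * ∏ i, (ξ i).descFactorial (v i) := by
  have hle : ∀ i, v i ≤ ξ i := fun i => Finsupp.le_def.mp hv i
  have h1 : ∀ i, (ξ i).factorial = (ξ i - v i).factorial * (ξ i).descFactorial (v i) :=
    fun i => (Nat.factorial_mul_descFactorial (hle i)).symm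
  have h2 : ∀ i, (ξ - v) i = ξ i - v i := fun i => Finsupp.tsub_apply ξ v i
  calc Nat.multinomial Finset.univ ⇑(ξ - v) * ∏ i, (ξ i).factorial
      = Nat.multinomial Finset.univ ⇑(ξ - v) *
        ((∏ i, ((ξ - v) i).factorial) * ∏ i, (ξ i).descFactorial (v i)) := by
        rw [← Finset.prod_mul_distrib]
        congr 1
        exact Finset.prod_congr rfl fun i _ => by rw [h1 i, h2 i]
    _ = ((∏ i, ((ξ - v) i).factorial) * Nat.multinomial Finset.univ ⇑(ξ - v)) *
        ∏ i, (ξ i).descFactorial (v i) := by ring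
    _ = k.factorial * ∏ i, (ξ i).descFactorial (v i) := by
        rw [Nat.multinomial_spec, hs]

-- Lemma B: real descFactorial as product
lemma aux_desc_real (m l : ℕ) :
    ∏ j ∈ Finset.range l, ((m : ℝ) - (j : ℝ)) = (m.descFactorial l : ℝ) := by
  by_cases h : l ≤ m
  · rw [Nat.descFactorial_eq_prod_range]
    rw [Nat.cast_prod]
    refine Finset.prod_congr rfl fun j hj => ?_
    rw [Finset.mem_range] at hj
    rw [Nat.cast_sub (le_of_lt (lt_of_lt_of_le hj h))]
  · push_neg at h
    rw [Nat.descFactorial_eq_zero_iff_lt.mpr h, Nat.cast_zero]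
    apply Finset.prod_eq_zero (Finset.mem_range.mpr h)
    simp

-- descFactorial product is zero when not ≤
lemma aux_desc_zero {n : ℕ} (ξ v : Fin n →₀ ℕ) (hv : ¬ v ≤ ξ) :
    ∏ i, (ξ i).descFactorial (v i) = 0 := by
  rw [Finsupp.le_def] at hv
  push_neg at hv
  obtain ⟨i, hi⟩ := hv
  exact Finset.prod_eq_zero (Finset.mem_univ i) (Nat.descFactorial_eq_zero_iff_lt.mpr hi)

-- Identity (I)
lemma aux_identity (n d k : ℕ) (p : MvPolynomial (Fin n) ℝ)
    (hd : ∀ v ∈ p.support, (∑ i, v i) = d)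
    (ξ : Fin n →₀ ℕ) (hξ : (∑ i, ξ i) = d + k) :
    MvPolynomial.coeff ξ ((∑ i : Fin n, MvPolynomial.X i) ^ k * p) * ∏ i, ((ξ i).factorial : ℝ)
      = (k.factorial : ℝ) * ∑ v ∈ p.support,
          MvPolynomial.coeff v p * ∏ i, ((ξ i).descFactorial (v i) : ℝ) := by
  have hsplit : (∑ i : Fin n, MvPolynomial.X i) ^ k * p
      = ∑ v ∈ p.support, (∑ i : Fin n, MvPolynomial.X i) ^ k
          * MvPolynomial.monomial v (MvPolynomial.coeff v p) := by
    conv_lhs => rw [p.as_sum]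
    rw [Finset.mul_sum]
  rw [hsplit, MvPolynomial.coeff_sum, Finset.sum_mul, Finset.mul_sum]
  refine Finset.sum_congr rfl fun v hv => ?_
  rw [MvPolynomial.coeff_mul_monomial']
  by_cases hle : v ≤ ξ
  · have hsum : (∑ i, (ξ - v) i) = k := by
      have h2 : ∀ i, (ξ - v) i = ξ i - v i := fun i => Finsupp.tsub_apply ξ v i
      have hle' : ∀ i, v i ≤ ξ i := fun i => Finsupp.le_def.mp hle i
      have : (∑ i, (ξ - v) i) + (∑ i, v i) = ∑ i, ξ i := by
        rw [← Finset.sum_add_distrib]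
        exact Finset.sum_congr rfl fun i _ => by have := hle' i; rw [h2 i]; omega
      have hvd := hd v hv
      omega
    rw [if_pos hle, aux_coeff_sumX_pow, if_pos hsum]
    have hA := aux_multinomial_desc ξ v hle k hsum
    have hA' : (Nat.multinomial Finset.univ ⇑(ξ - v) : ℝ) * ∏ i, ((ξ i).factorial : ℝ)
        = (k.factorial : ℝ) * ∏ i, ((ξ i).descFactorial (v i) : ℝ) := by
      exact_mod_cast congrArg (Nat.cast : ℕ → ℝ) hA
    linear_combination (MvPolynomial.coeff v p) * hA'
  · rw [if_neg hle, zero_mul]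
    have h0 : ∏ i, (((ξ i).descFactorial (v i) : ℕ) : ℝ) = 0 := by
      exact_mod_cast congrArg (Nat.cast : ℕ → ℝ) (aux_desc_zero ξ v hle)
    rw [h0, mul_zero, mul_zero]


/-- Polya's theorem, scalar case: if `p` is a homogeneous polynomial of
degree `d` that is strictly positive on the standard simplex, then for some `k ∈ ℕ` all
coefficients (on monomials of degree `d + k`) of `p(λ)·(λ₁ + ⋯ + λₙ)^k` are positive. -/
theorem stmt17_polya (n d : ℕ) (p : MvPolynomial (Fin n) ℝ)
    (hhom : p.IsHomogeneous d)
    (hpos : ∀ lam ∈ stdSimplex ℝ (Fin n), 0 < MvPolynomial.eval lam p) :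
    ∃ k : ℕ, ∀ ξ : Fin n →₀ ℕ, (ξ.sum fun _ e => e) = d + k →
      0 < MvPolynomial.coeff ξ ((∑ i : Fin n, MvPolynomial.X i) ^ k * p) := by
  classical
  -- degrees in the support
  have hd : ∀ v ∈ p.support, (∑ i, v i) = d := by
    intro v hv
    have h1 : Finsupp.weight 1 v = d := hhom (MvPolynomial.mem_support_iff.mp hv)
    have h2 : v.degree = d := by rwa [Finsupp.degree_eq_weight_one]
    rw [← h2, Finsupp.degree]
    exact (Finset.sum_subset (Finset.subset_univ v.support)
      (fun i _ hi => Finsupp.notMem_support_iff.mp hi)).symm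
  -- the perturbed function
  set F : ℝ × (Fin n → ℝ) → ℝ := fun q =>
    ∑ v ∈ p.support, MvPolynomial.coeff v p *
      ∏ i, ∏ j ∈ Finset.range (v i), (q.2 i - (j : ℝ) * q.1) with hF
  have hFcont : Continuous F := by
    apply continuous_finset_sum
    intro v _
    apply Continuous.mul continuous_const
    apply continuous_finset_prod
    intro i _
    apply continuous_finset_prod
    intro j _
    exact ((continuous_apply i).comp continuous_snd).sub (continuous_const.mul continuous_fst)
  have hF0 : ∀ x : Fin n → ℝ, F (0, x) = MvPolynomial.eval x p := by
    intro x
    rw [hF, MvPolynomial.eval_eq']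
    refine Finset.sum_congr rfl fun v _ => ?_
    congr 1
    refine Finset.prod_congr rfl fun i _ => ?_
    simp
  have hU : IsOpen (F ⁻¹' Set.Ioi 0) := hFcont.isOpen_preimage _ isOpen_Ioi
  have hsub : ({0} : Set ℝ) ×ˢ stdSimplex ℝ (Fin n) ⊆ F ⁻¹' Set.Ioi 0 := by
    rintro ⟨s, x⟩ ⟨hs, hx⟩
    simp only [Set.mem_singleton_iff] at hs
    subst hs
    have := hpos x hx
    simp only [Set.mem_preimage, Set.mem_Ioi]
    rw [hF0 x]
    exact this
  obtain ⟨u, w, hu, hw, h0u, hKw, huw⟩ := generalized_tube_lemma isCompact_singleton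
    (isCompact_stdSimplex ℝ (Fin n)) hU hsub
  obtain ⟨ε, hε, hball⟩ := Metric.isOpen_iff.mp hu 0 (h0u rfl)
  set k : ℕ := ⌈ε⁻¹⌉₊ + 1 with hk
  refine ⟨k, ?_⟩
  intro ξ hξ
  have hξ' : (∑ i, ξ i) = d + k := by
    rw [← hξ]
    exact (Finsupp.sum_fintype ξ (fun _ e => e) (fun i => rfl)).symm
  set t : ℝ := ((d + k : ℕ) : ℝ) with hts
  have ht : 0 < t := by
    have h0 : 0 < d + k := by omega
    rw [hts]
    exact_mod_cast h0
  have hεt : ε⁻¹ < t := by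
    have h1 : (ε⁻¹ : ℝ) ≤ (⌈ε⁻¹⌉₊ : ℝ) := Nat.le_ceil _
    have h2 : ((⌈ε⁻¹⌉₊ : ℕ) : ℝ) + 1 ≤ t := by
      rw [hts, hk]
      push_cast
      linarith [show (0:ℝ) ≤ (d:ℝ) from Nat.cast_nonneg d]
    linarith
  have h1tu : (1 / t) ∈ u := by
    apply hball
    rw [Metric.mem_ball, Real.dist_eq, sub_zero, abs_of_pos (by positivity)]
    rw [div_lt_iff₀ ht, ← div_lt_iff₀' hε]
    rw [one_div]
    exact hεt
  set x : Fin n → ℝ := fun i => (ξ i : ℝ) / t with hx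
  have hxK : x ∈ stdSimplex ℝ (Fin n) := by
    constructor
    · intro i
      positivity
    · rw [hx]
      have : ∑ i, ((ξ i : ℝ) / t) = (∑ i, (ξ i : ℝ)) / t := by
        rw [Finset.sum_div]
      rw [this]
      have hs : (∑ i, (ξ i : ℝ)) = t := by
        rw [hts, ← hξ']
        push_cast
        rfl
      rw [hs, div_self (ne_of_gt ht)]
  have hFpos : 0 < F (1 / t, x) := huw ⟨h1tu, hKw hxK⟩
  -- identity (II)
  have hII : F (1 / t, x) * t ^ d
      = ∑ v ∈ p.support, MvPolynomial.coeff v p *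
          ∏ i, ((ξ i).descFactorial (v i) : ℝ) := by
    rw [hF, Finset.sum_mul]
    refine Finset.sum_congr rfl fun v hv => ?_
    have hvd := hd v hv
    have hinner : ∀ i, ∏ j ∈ Finset.range (v i), (x i - (j : ℝ) * (1 / t))
        = ((ξ i).descFactorial (v i) : ℝ) * (t⁻¹) ^ (v i) := by
      intro i
      have : ∀ j ∈ Finset.range (v i), (x i - (j : ℝ) * (1 / t))
          = ((ξ i : ℝ) - j) * t⁻¹ := by
        intro j _
        rw [hx]
        field_simp
      rw [Finset.prod_congr rfl this, Finset.prod_mul_distrib, Finset.prod_const,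
        Finset.card_range, aux_desc_real]
    calc MvPolynomial.coeff v p * (∏ i, ∏ j ∈ Finset.range (v i), (x i - (j:ℝ) * (1/t))) * t ^ d
        = MvPolynomial.coeff v p * ((∏ i, ((ξ i).descFactorial (v i) : ℝ))
            * ∏ i, (t⁻¹) ^ (v i)) * t ^ d := by
          rw [Finset.prod_congr rfl fun i _ => hinner i, Finset.prod_mul_distrib]
      _ = MvPolynomial.coeff v p * ((∏ i, ((ξ i).descFactorial (v i) : ℝ))
            * ((t⁻¹) ^ d * t ^ d)) := by
          rw [Finset.prod_pow_eq_pow_sum, hvd]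
          ring
      _ = MvPolynomial.coeff v p * ∏ i, ((ξ i).descFactorial (v i) : ℝ) := by
          rw [← mul_pow, inv_mul_cancel₀ (ne_of_gt ht), one_pow, mul_one]
  have hI := aux_identity n d k p hd ξ hξ'
  have hP : 0 < ∏ i, (((ξ i).factorial : ℕ) : ℝ) :=
    Finset.prod_pos fun i _ => by exact_mod_cast (ξ i).factorial_pos
  have hmain : 0 < MvPolynomial.coeff ξ ((∑ i : Fin n, MvPolynomial.X i) ^ k * p)
      * ∏ i, (((ξ i).factorial : ℕ) : ℝ) := by
    rw [hI, ← hII]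
    have hkf : (0:ℝ) < (k.factorial : ℝ) := by exact_mod_cast k.factorial_pos
    positivity
  nlinarith [hmain, hP]
end
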